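/- The MRU invariant candidate π(r) = (λ_{r(1)}/Λ) · (1/C(N-1,B-1)) · ∏_{k=2}^{B-1} λ_{r(k)}/(Λ_{-r} - Σ_{i=1}^{k-1} λ_{r(i)}), where Λ_{-r} = Σ_{i=1}^B λ_{r(i)}, defines a probability distribution on the set of B-permutations of {1,...,N}: it is nonnegative and its sum over all B-permutations equals 1. -/

import Mathlib

open Finset

variable {α : Type*} [Fintype α] [DecidableEq α]

noncomputable def Psuf (w : α → ℝ) {m : ℕ} (f : Fin m → α) : ℝ :=
  ∏ k : Fin m, w (f k) / ∑ j ∈ Finset.univ.filter (fun j => k ≤ j), w (f j)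

lemma suffix_eq {m : ℕ} (v : Fin m → ℝ) (k : Fin m) :
    (∑ i, v i) - ∑ i ∈ Finset.univ.filter (fun i => i < k), v i
      = ∑ i ∈ Finset.univ.filter (fun i => k ≤ i), v i := by
  rw [sub_eq_iff_eq_add, ← Finset.sum_filter_add_sum_filter_not Finset.univ (fun i => k ≤ i)]
  congr 1
  apply Finset.sum_congr _ (fun _ _ => rfl)
  ext i; simp [not_le]

lemma Psuf_cons (w : α → ℝ) {m : ℕ} (a : α) (g : Fin m → α) :
    Psuf w (Fin.cons a g) = w a / (w a + ∑ j, w (g j)) * Psuf w g := by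
  rw [Psuf, Fin.prod_univ_succ]
  congr 1
  · congr 1
    rw [show Finset.univ.filter (fun j : Fin (m+1) => (0:Fin (m+1)) ≤ j) = Finset.univ from by
      ext j; simp [Fin.zero_le], Fin.sum_univ_succ]
    simp
  · apply Finset.prod_congr rfl
    intro k _
    congr 1
    rw [Finset.sum_filter, Finset.sum_filter, Fin.sum_univ_succ]
    have h0 : ¬ (Fin.succ k ≤ 0) := by simp [Fin.le_def]
    rw [if_neg h0, zero_add]
    apply Finset.sum_congr rfl
    intro j _
    simp [Fin.succ_le_succ_iff]

set_option linter.unusedSectionVars false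

set_option maxHeartbeats 1000000 in
lemma key (w : α → ℝ) (hw : ∀ a, 0 < w a) :
    ∀ (m : ℕ) (s : Finset α), s.card = m →
      ∑ f : Fin m ↪ α, (if Finset.univ.image ⇑f = s then Psuf w ⇑f else 0) = 1 := by
  intro m
  induction m with
  | zero =>
    intro s hs
    rw [Finset.card_eq_zero] at hs
    subst hs
    have h1 : ∀ f : Fin 0 ↪ α, (if Finset.univ.image ⇑f = (∅ : Finset α) then Psuf w ⇑f else 0) = 1 := by
      intro f
      rw [if_pos (by simp), Psuf]
      simp
    rw [Finset.sum_congr rfl (fun f _ => h1 f), Finset.sum_const, Finset.card_univ,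
      Fintype.card_embedding_eq]
    simp
  | succ m ih =>
    intro s hs
    rw [← Equiv.sum_comp (Equiv.embeddingFinSucc m α).symm
      (fun f : Fin (m+1) ↪ α => if Finset.univ.image ⇑f = s then Psuf w ⇑f else 0),
      ← Finset.univ_sigma_univ, Finset.sum_sigma]
    have hW : (0:ℝ) < ∑ x ∈ s, w x := by
      apply Finset.sum_pos (fun x _ => hw x)
      rw [← Finset.card_pos, hs]; omega
    have step : ∀ g : Fin m ↪ α,
        (∑ a : {i // i ∉ Set.range ⇑g},
          (if Finset.univ.image ⇑((Equiv.embeddingFinSucc m α).symm ⟨g, a⟩) = s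
            then Psuf w ⇑((Equiv.embeddingFinSucc m α).symm ⟨g, a⟩) else 0))
        = ∑ a : α, (if a ∈ s ∧ Finset.univ.image ⇑g = s.erase a
            then (w a / ∑ x ∈ s, w x) * Psuf w ⇑g else 0) := by
      intro g
      have hco : ∀ a : α, (ha : a ∉ Set.range ⇑g) →
          ⇑((Equiv.embeddingFinSucc m α).symm ⟨g, ⟨a, ha⟩⟩) = Fin.cons a ⇑g := by
        intro a ha
        exact Equiv.coe_embeddingFinSucc_symm ⟨g, ⟨a, ha⟩⟩
      have himg : ∀ a : α, Finset.univ.image (Fin.cons a ⇑g : Fin (m+1) → α)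
          = insert a (Finset.univ.image ⇑g) := by
        intro a
        rw [Fin.univ_succ, Finset.cons_eq_insert, Finset.image_insert]
        simp only [Fin.cons_zero]
        congr 1
        rw [Finset.map_eq_image, Finset.image_image]
        apply Finset.image_congr
        intro x _
        simp
      classical
      have hstep1 : (∑ a : {i // i ∉ Set.range ⇑g},
          (if Finset.univ.image ⇑((Equiv.embeddingFinSucc m α).symm ⟨g, a⟩) = s
            then Psuf w ⇑((Equiv.embeddingFinSucc m α).symm ⟨g, a⟩) else 0))
          = ∑ a : {i // i ∉ Set.range ⇑g},
            (if insert a.1 (Finset.univ.image ⇑g) = s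
              then Psuf w (Fin.cons a.1 ⇑g) else 0) := by
        apply Finset.sum_congr rfl
        intro a _
        rw [hco a.1 a.2, himg a.1]
      rw [hstep1,
        ← Finset.sum_subtype (Finset.univ.filter (fun i => i ∉ Set.range ⇑g))
          (by simp) (fun a => if insert a (Finset.univ.image ⇑g) = s
            then Psuf w (Fin.cons a ⇑g) else 0)]
      rw [Finset.sum_filter_of_ne (p := fun a => a ∉ Set.range ⇑g) (f := fun a =>
          if a ∈ s ∧ Finset.univ.image ⇑g = s.erase a
            then (w a / ∑ x ∈ s, w x) * Psuf w ⇑g else 0) ?side |>.symm]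
      case side =>
        intro a _ hne
        by_contra hmem
        simp only [not_not, Set.mem_range] at hmem
        apply hne
        rw [if_neg]
        rintro ⟨has, himg2⟩
        have : a ∈ s.erase a := himg2 ▸ (by
          obtain ⟨j, hj⟩ := hmem
          exact Finset.mem_image.2 ⟨j, Finset.mem_univ j, hj⟩)
        simp at this
      apply Finset.sum_congr rfl
      intro a ha
      simp only [Finset.mem_filter] at ha
      have hag : a ∉ Set.range ⇑g := ha.2
      have hag' : a ∉ Finset.univ.image ⇑g := by
        simp only [Finset.mem_image]
        rintro ⟨j, _, hj⟩
        exact hag ⟨j, hj⟩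
      have hcond : (insert a (Finset.univ.image ⇑g) = s)
          ↔ (a ∈ s ∧ Finset.univ.image ⇑g = s.erase a) := by
        constructor
        · intro h
          refine ⟨h ▸ Finset.mem_insert_self a _, ?_⟩
          rw [← h, Finset.erase_insert hag']
        · rintro ⟨has, hrest⟩
          rw [hrest, Finset.insert_erase has]
      by_cases h : a ∈ s ∧ Finset.univ.image ⇑g = s.erase a
      · rw [if_pos (hcond.2 h), if_pos h, Psuf_cons]
        congr 2
        rw [show (∑ j, w (g j)) = ∑ x ∈ Finset.univ.image ⇑g, w x from
          (Finset.sum_image (fun x _ y _ hxy => g.injective hxy)).symm, h.2,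
          ← Finset.sum_insert (by simp), Finset.insert_erase h.1]
      · rw [if_neg (fun hc => h (hcond.1 hc)), if_neg h]
    rw [Finset.sum_congr rfl (fun g _ => step g), Finset.sum_comm]
    have inner : ∀ a : α, (∑ g : Fin m ↪ α,
        if a ∈ s ∧ Finset.univ.image ⇑g = s.erase a
          then (w a / ∑ x ∈ s, w x) * Psuf w ⇑g else 0)
        = if a ∈ s then w a / ∑ x ∈ s, w x else 0 := by
      intro a
      by_cases has : a ∈ s
      · rw [if_pos has]
        have : ∀ g : Fin m ↪ α,
            (if a ∈ s ∧ Finset.univ.image ⇑g = s.erase a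
              then (w a / ∑ x ∈ s, w x) * Psuf w ⇑g else 0)
            = (w a / ∑ x ∈ s, w x) *
              (if Finset.univ.image ⇑g = s.erase a then Psuf w ⇑g else 0) := by
          intro g
          by_cases hg : Finset.univ.image ⇑g = s.erase a
          · rw [if_pos ⟨has, hg⟩, if_pos hg]
          · rw [if_neg (fun hc => hg hc.2), if_neg hg, mul_zero]
        rw [Finset.sum_congr rfl (fun g _ => this g), ← Finset.mul_sum,
          ih (s.erase a) (by rw [Finset.card_erase_of_mem has, hs]; omega), mul_one]
      · rw [if_neg has]
        apply Finset.sum_eq_zero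
        intro g _
        rw [if_neg (fun hc => has hc.1)]
    rw [Finset.sum_congr rfl (fun a _ => inner a), ← Finset.sum_filter,
      Finset.filter_univ_mem, ← Finset.sum_div, div_self hW.ne']

lemma count_lemma (w : α → ℝ) (hw : ∀ a, 0 < w a) (m : ℕ) (t : Finset α) :
    ∑ g : Fin m ↪ α, (if ∀ k, g k ∈ t then Psuf w ⇑g else 0)
      = (t.card.choose m : ℝ) := by
  classical
  have hcard : ∀ g : Fin m ↪ α, (Finset.univ.image ⇑g).card = m := by
    intro g
    rw [Finset.card_image_of_injective _ g.injective, Finset.card_univ, Fintype.card_fin]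
  have per_g : ∀ g : Fin m ↪ α, (if ∀ k, g k ∈ t then Psuf w ⇑g else 0)
      = ∑ s ∈ Finset.powersetCard m t,
          (if Finset.univ.image ⇑g = s then Psuf w ⇑g else 0) := by
    intro g
    rw [Finset.sum_ite_eq (Finset.powersetCard m t) (Finset.univ.image ⇑g)
      (fun _ => Psuf w ⇑g)]
    congr 1
    rw [Finset.mem_powersetCard]
    simp only [hcard g, and_true, eq_iff_iff]
    constructor
    · intro h
      intro x hx
      obtain ⟨k, _, rfl⟩ := Finset.mem_image.1 hx
      exact h k
    · intro h k
      exact h (Finset.mem_image.2 ⟨k, Finset.mem_univ k, rfl⟩)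
  rw [Finset.sum_congr rfl (fun g _ => per_g g), Finset.sum_comm]
  rw [Finset.sum_congr rfl (fun s hs => key w hw m s (Finset.mem_powersetCard.1 hs).2),
    Finset.sum_const, Finset.card_powersetCard]
  simp

lemma sum_filter_succ {m : ℕ} (v : Fin (m+1) → ℝ) (k : Fin m) :
    ∑ j ∈ Finset.univ.filter (fun j => Fin.succ k ≤ j), v j
      = ∑ j ∈ Finset.univ.filter (fun j => k ≤ j), v (Fin.succ j) := by
  rw [Finset.sum_filter, Finset.sum_filter, Fin.sum_univ_succ,
    if_neg (by simp [Fin.le_def]), zero_add]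
  exact Finset.sum_congr rfl fun j _ => by simp [Fin.succ_le_succ_iff]

lemma prod_eq {N m : ℕ} (lam : Fin N → ℝ) (hlam : ∀ n, 0 < lam n) (f : Fin (m+1) → Fin N) :
    (∏ k ∈ Finset.univ.filter (fun k : Fin (m+1) => 1 ≤ k.val ∧ k.val < m),
        lam (f k) /
          ((∑ i : Fin (m+1), lam (f i)) -
            ∑ i ∈ Finset.univ.filter (fun i : Fin (m+1) => i < k), lam (f i)))
      = Psuf lam (f ∘ Fin.succ) := by
  set G : Fin (m+1) → ℝ := fun k =>
    lam (f k) / ((∑ i : Fin (m+1), lam (f i)) -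
      ∑ i ∈ Finset.univ.filter (fun i : Fin (m+1) => i < k), lam (f i)) with hG
  have hGlast : G (Fin.last m) = 1 := by
    rw [hG]
    dsimp only
    rw [suffix_eq (fun i => lam (f i)) (Fin.last m)]
    rw [show Finset.univ.filter (fun i : Fin (m+1) => Fin.last m ≤ i) = {Fin.last m} from by
      ext i
      simp only [Finset.mem_filter, Finset.mem_univ, true_and, Finset.mem_singleton]
      constructor
      · intro h; exact le_antisymm (Fin.le_last i) h
      · rintro rfl; exact le_refl _]
    rw [Finset.sum_singleton, div_self (hlam _).ne']
  have step1 : (∏ k ∈ Finset.univ.filter (fun k : Fin (m+1) => 1 ≤ k.val ∧ k.val < m), G k)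
      = ∏ k ∈ Finset.univ.filter (fun k : Fin (m+1) => 1 ≤ k.val), G k := by
    apply Finset.prod_subset
    · intro k hk
      simp only [Finset.mem_filter] at hk ⊢
      exact ⟨hk.1, hk.2.1⟩
    · intro k hk hk2
      simp only [Finset.mem_filter, Finset.mem_univ, true_and, not_and, not_lt] at hk hk2
      have hkm : k.val = m := by
        have := k.isLt
        have := hk2 hk
        omega
      have : k = Fin.last m := Fin.ext hkm
      rw [this, hGlast]
  have step2 : (∏ k ∈ Finset.univ.filter (fun k : Fin (m+1) => 1 ≤ k.val), G k)
      = ∏ k : Fin m, G (Fin.succ k) := by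
    rw [Finset.prod_filter, Fin.prod_univ_succ, if_neg (by simp), one_mul]
    exact Finset.prod_congr rfl fun k _ => by rw [if_pos (by simp [Fin.val_succ])]
  rw [step1, step2, Psuf]
  apply Finset.prod_congr rfl
  intro k _
  rw [hG]
  dsimp only [Function.comp]
  rw [suffix_eq (fun i => lam (f i)) (Fin.succ k), sum_filter_succ (fun i => lam (f i)) k]

/-- The MRU invariant candidate (0-based ranks):
`π(r) = (λ_{r(1)}/Λ) · (1/C(N-1,B-1)) · ∏_{k=2}^{B-1} λ_{r(k)}/(Λ_{-r} - Σ_{i=1}^{k-1} λ_{r(i)})`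
where `Λ_{-r} = Σ_{i=1}^B λ_{r(i)}`. -/
noncomputable def piMRU (N B : ℕ) (lam : Fin N → ℝ) (r : Fin B → Fin N) : ℝ :=
  if h : 0 < B then
    lam (r ⟨0, h⟩) / (∑ n, lam n) * (1 / (Nat.choose (N - 1) (B - 1) : ℝ)) *
      ∏ k ∈ Finset.univ.filter (fun k : Fin B => 1 ≤ k.val ∧ k.val < B - 1),
        lam (r k) /
          ((∑ i : Fin B, lam (r i)) -
            ∑ i ∈ Finset.univ.filter (fun i : Fin B => i < k), lam (r i))
  else 0

set_option maxHeartbeats 1000000 in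
/-- The MRU invariant candidate is a probability distribution on the set of
B-permutations of {1,...,N}: nonnegative and summing to 1. -/
theorem piMRU_prob (N B : ℕ) (hB : 2 ≤ B) (hBN : B < N)
    (lam : Fin N → ℝ) (hlam : ∀ n, 0 < lam n) :
    (∀ r : Fin B ↪ Fin N, 0 ≤ piMRU N B lam r) ∧
      (∑ r : Fin B ↪ Fin N, piMRU N B lam r) = 1 := by
  classical
  have hN : 0 < N := by omega
  have hNE : Nonempty (Fin N) := ⟨⟨0, hN⟩⟩
  have hΛ : (0:ℝ) < ∑ n, lam n :=
    Finset.sum_pos (fun n _ => hlam n) Finset.univ_nonempty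
  obtain ⟨m, rfl⟩ : ∃ m, B = m + 1 := ⟨B - 1, by omega⟩
  have hCpos : 0 < ((N - 1).choose (m + 1 - 1) : ℝ) := by
    rw [Nat.cast_pos]
    exact Nat.choose_pos (by omega)
  have hrw : ∀ r : Fin (m+1) → Fin N, piMRU N (m+1) lam r =
      lam (r 0) / (∑ n, lam n) * (1 / ((N - 1).choose m : ℝ)) * Psuf lam (r ∘ Fin.succ) := by
    intro r
    rw [piMRU, dif_pos (Nat.succ_pos m)]
    simp only [Nat.add_sub_cancel]
    rw [prod_eq lam hlam r]
    rfl
  constructor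
  · intro r
    rw [hrw]
    apply mul_nonneg (mul_nonneg (div_nonneg (hlam _).le hΛ.le)
      (by positivity))
    rw [Psuf]
    apply Finset.prod_nonneg
    intro k _
    apply div_nonneg (hlam _).le
    apply Finset.sum_nonneg
    intro j _
    exact (hlam _).le
  · rw [Finset.sum_congr rfl (fun (r : Fin (m+1) ↪ Fin N) _ => hrw ⇑r)]
    rw [← Equiv.sum_comp (Equiv.embeddingFinSucc m (Fin N)).symm
      (fun r : Fin (m+1) ↪ Fin N =>
        lam (r 0) / (∑ n, lam n) * (1 / ((N - 1).choose m : ℝ)) * Psuf lam (⇑r ∘ Fin.succ)),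
      ← Finset.univ_sigma_univ, Finset.sum_sigma]
    have hterm : ∀ (g : Fin m ↪ Fin N) (a : {i // i ∉ Set.range ⇑g}),
        lam (((Equiv.embeddingFinSucc m (Fin N)).symm ⟨g, a⟩) 0) / (∑ n, lam n) *
          (1 / ((N - 1).choose m : ℝ)) *
          Psuf lam (⇑((Equiv.embeddingFinSucc m (Fin N)).symm ⟨g, a⟩) ∘ Fin.succ)
        = lam a.1 / (∑ n, lam n) * (1 / ((N - 1).choose m : ℝ)) * Psuf lam ⇑g := by
      intro g a
      have hc := Equiv.coe_embeddingFinSucc_symm (⟨g, a⟩ :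
        Σ (e : Fin m ↪ Fin N), {i // i ∉ Set.range ⇑e})
      rw [show ((Equiv.embeddingFinSucc m (Fin N)).symm ⟨g, a⟩) 0 = a.1 from by
          rw [show ((Equiv.embeddingFinSucc m (Fin N)).symm ⟨g, a⟩) 0
            = (Fin.cons a.1 ⇑g : Fin (m+1) → Fin N) 0 from congrFun hc 0, Fin.cons_zero],
        show ⇑((Equiv.embeddingFinSucc m (Fin N)).symm ⟨g, a⟩) ∘ Fin.succ = ⇑g from
          funext fun j => by rw [Function.comp_apply, congrFun hc (Fin.succ j), Fin.cons_succ]]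
    rw [Finset.sum_congr rfl (fun g _ => Finset.sum_congr rfl (fun a _ => hterm g a))]
    have hsub : ∀ g : Fin m ↪ Fin N,
        (∑ a : {i // i ∉ Set.range ⇑g},
          lam a.1 / (∑ n, lam n) * (1 / ((N - 1).choose m : ℝ)) * Psuf lam ⇑g)
        = ∑ a : Fin N, (if a ∉ Set.range ⇑g
            then lam a / (∑ n, lam n) * (1 / ((N - 1).choose m : ℝ)) * Psuf lam ⇑g else 0) := by
      intro g
      rw [← Finset.sum_subtype (Finset.univ.filter (fun i => i ∉ Set.range ⇑g)) (by simp)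
        (fun a => lam a / (∑ n, lam n) * (1 / ((N - 1).choose m : ℝ)) * Psuf lam ⇑g),
        Finset.sum_filter]
    rw [Finset.sum_congr rfl (fun g _ => hsub g), Finset.sum_comm]
    have hinner : ∀ a : Fin N,
        (∑ g : Fin m ↪ Fin N, if a ∉ Set.range ⇑g
            then lam a / (∑ n, lam n) * (1 / ((N - 1).choose m : ℝ)) * Psuf lam ⇑g else 0)
        = lam a / (∑ n, lam n) := by
      intro a
      have hpt : ∀ g : Fin m ↪ Fin N,
          (if a ∉ Set.range ⇑g
            then lam a / (∑ n, lam n) * (1 / ((N - 1).choose m : ℝ)) * Psuf lam ⇑g else 0)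
          = lam a / (∑ n, lam n) * (1 / ((N - 1).choose m : ℝ)) *
              (if (∀ k, g k ∈ Finset.univ.erase a) then Psuf lam ⇑g else 0) := by
        intro g
        have : (a ∉ Set.range ⇑g) ↔ (∀ k, g k ∈ Finset.univ.erase a) := by
          simp only [Set.mem_range, not_exists, Finset.mem_erase, Finset.mem_univ, and_true]
        by_cases hc : a ∉ Set.range ⇑g
        · rw [if_pos hc, if_pos (this.1 hc)]
        · rw [if_neg hc, if_neg (fun hk => hc (this.2 hk)), mul_zero]
      rw [Finset.sum_congr rfl (fun g _ => hpt g), ← Finset.mul_sum,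
        count_lemma lam hlam m (Finset.univ.erase a),
        show (Finset.univ.erase a).card = N - 1 from by
          rw [Finset.card_erase_of_mem (Finset.mem_univ a), Finset.card_univ, Fintype.card_fin],
        mul_assoc, one_div, inv_mul_cancel₀ (by simpa using hCpos.ne'), mul_one]
    rw [Finset.sum_congr rfl (fun a _ => hinner a), ← Finset.sum_div, div_self hΛ.ne']
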